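/- The stabilizer subalgebra in 𝔰𝔩₈(ℂ) of the four-vector ω∧ω (where ω = e₁∧e₂ + e₃∧e₄ + e₅∧e₆ + e₇∧e₈) under the derivation action on Λ⁴ℂ⁸ equals the symplectic Lie algebra of the skew form B: {X ∈ 𝔰𝔩₈(ℂ) : X·(ω∧ω) = 0} = {X ∈ 𝔰𝔩₈(ℂ) : XᵀB + BX = 0}, where B is the 8×8 skew-symmetric matrix of the bilinear form e¹∧e² + e³∧e⁴ + e⁵∧e⁶ + e⁷∧e⁸; in particular this stabilizer has dimension 36 (it is the simple Lie algebra of type C₄). -/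

import Mathlib

/-!
Common setup: the ℤ/2-graded Lie algebra 𝔤 = 𝔰𝔩(V) ⊕ Λ⁴V for V = ℂ⁸,
following Antonyan.  Four-vectors are modeled as alternating 4-tensors in
⊗⁴V, i.e. functions `(Fin 4 → Fin 8) → ℂ`, via the embedding
`v₁∧v₂∧v₃∧v₄ = Σ_σ sgn σ · v_{σ(1)}⊗v_{σ(2)}⊗v_{σ(3)}⊗v_{σ(4)}`.
(All indices are shifted from `1,…,8` to `0,…,7`.)
-/

noncomputable section

open scoped BigOperators

/-- `𝔤𝔩₈(ℂ)`, as 8×8 complex matrices. -/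
abbrev gl8 : Type := Matrix (Fin 8) (Fin 8) ℂ

/-- Coordinates of an element of `⊗⁴ ℂ⁸`. -/
abbrev T4 : Type := (Fin 4 → Fin 8) → ℂ

/-- The sign of a permutation, as a complex number. -/
def sgn {n : ℕ} (σ : Equiv.Perm (Fin n)) : ℂ := ((Equiv.Perm.sign σ : ℤ) : ℂ)

/-- A 4-tensor is alternating, i.e. lies in the image of `Λ⁴V ⊂ ⊗⁴V`. -/
def IsAlt (T : T4) : Prop :=
  ∀ (σ : Equiv.Perm (Fin 4)) (v : Fin 4 → Fin 8), T (v ∘ σ) = sgn σ * T v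

/-- The determinant form `δ ∈ Λ⁸V*` with `δ(e₁,…,e₈) = 1`:
`delta8 f = δ_{f(1)…f(8)}`. -/
def delta8 (f : Fin 8 → Fin 8) : ℂ :=
  Matrix.det (Matrix.of fun i j : Fin 8 => if f j = i then (1 : ℂ) else 0)

/-- The bracket on `𝔤₀ = 𝔰𝔩(V)`: the commutator of matrices. -/
def br00 (A B : gl8) : gl8 := A * B - B * A

/-- The bracket `[A,T]` of `A ∈ 𝔤₀` with `T ∈ 𝔤₁ = Λ⁴V`: the derivation
action `[A,T]^{ijkl} = A^i_s T^{sjkl} + A^j_s T^{iskl} + A^k_s T^{ijsl} + A^l_s T^{ijks}`. -/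
def br01 (A : gl8) (T : T4) : T4 :=
  fun v => ∑ a : Fin 4, ∑ s : Fin 8, A (v a) s * T (Function.update v a s)

/-- The bracket of two four-vectors,
`[T₁,T₂]^k_m = −(1/288) δ_{p₁q₁r₁s₁p₂q₂r₂m}(T₁^{p₁q₁r₁s₁}T₂^{p₂q₂r₂k} − T₂^{p₁q₁r₁s₁}T₁^{p₂q₂r₂k})`
(summation over the repeated indices `p₁,q₁,r₁,s₁,p₂,q₂,r₂`). -/
def br11 (T₁ T₂ : T4) : gl8 :=
  Matrix.of fun k m : Fin 8 =>
    -(1 / 288 : ℂ) * ∑ f : Fin 7 → Fin 8,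
      delta8 (Fin.snoc f m) *
        (T₁ (fun a : Fin 4 => f (Fin.castAdd 3 a)) *
            T₂ (Fin.snoc (fun b : Fin 3 => f (Fin.natAdd 4 b)) k) -
          T₂ (fun a : Fin 4 => f (Fin.castAdd 3 a)) *
            T₁ (Fin.snoc (fun b : Fin 3 => f (Fin.natAdd 4 b)) k))

/-- The bracket on (the ambient space of) `𝔤 = 𝔰𝔩(V) ⊕ Λ⁴V`, an element of
which is represented as a pair `(A, T)` with `A` a matrix and `T` a 4-tensor. -/
def gBracket (x y : gl8 × T4) : gl8 × T4 :=
  (br00 x.1 y.1 + br11 x.2 y.2, br01 x.1 y.2 - br01 y.1 x.2)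

/-- The subspace `𝔤 = 𝔰𝔩(V) ⊕ Λ⁴V` of the ambient space `𝔤𝔩(V) × ⊗⁴V`:
traceless first component and alternating second component. -/
def gSub : Submodule ℂ (gl8 × T4) where
  carrier := {x | Matrix.trace x.1 = 0 ∧ IsAlt x.2}
  add_mem' := by
    rintro x y ⟨hx1, hx2⟩ ⟨hy1, hy2⟩
    refine ⟨by simp [Matrix.trace_add, hx1, hy1], fun σ v => ?_⟩
    simp only [Prod.snd_add, Pi.add_apply]
    rw [hx2 σ v, hy2 σ v]; ring
  zero_mem' := ⟨by simp, fun σ v => by simp⟩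
  smul_mem' := by
    rintro c x ⟨hx1, hx2⟩
    refine ⟨by simp [Matrix.trace_smul, hx1], fun σ v => ?_⟩
    simp only [Prod.smul_snd, Pi.smul_apply, smul_eq_mul]
    rw [hx2 σ v]; ring

/-- The adjoint action of a four-vector `t ∈ 𝔤₁` on `𝔤`. -/
def adT (t : T4) : gl8 × T4 → gl8 × T4 := fun y => gBracket ((0 : gl8), t) y

/-- The adjoint action of a matrix `A ∈ 𝔤₀` on `𝔤`. -/
def adM (A : gl8) : gl8 × T4 → gl8 × T4 := fun y => gBracket (A, (0 : T4)) y

/-- A four-vector `t` is a nilpotent element of `𝔤`: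
`ad t : 𝔤 → 𝔤` is a nilpotent endomorphism. -/
def IsNilpotentFour (t : T4) : Prop :=
  ∃ n : ℕ, ∀ y ∈ gSub, (adT t)^[n] y = 0

/-- A four-vector `t` is a semisimple element of `𝔤`: `ad t : 𝔤 → 𝔤` is a
diagonalizable endomorphism, i.e. `𝔤` is spanned by eigenvectors of `ad t`. -/
def IsSemisimpleFour (t : T4) : Prop :=
  ∃ (n : ℕ) (v : Fin n → gl8 × T4) (μ : Fin n → ℂ),
    (∀ i, v i ∈ gSub) ∧ Submodule.span ℂ (Set.range v) = gSub ∧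
      ∀ i, adT t (v i) = μ i • v i

/-- A matrix `A ∈ 𝔤₀` is a semisimple element of `𝔤`: `ad A : 𝔤 → 𝔤` is a
diagonalizable endomorphism. -/
def IsSemisimpleMat (A : gl8) : Prop :=
  ∃ (n : ℕ) (v : Fin n → gl8 × T4) (μ : Fin n → ℂ),
    (∀ i, v i ∈ gSub) ∧ Submodule.span ℂ (Set.range v) = gSub ∧
      ∀ i, adM A (v i) = μ i • v i

/-- The four-vector `e_{w(1)} ∧ e_{w(2)} ∧ e_{w(3)} ∧ e_{w(4)}`, as an
alternating 4-tensor. -/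
def wedge4 (w : Fin 4 → Fin 8) : T4 :=
  fun v => Matrix.det (Matrix.of fun a b : Fin 4 => if w a = v b then (1 : ℂ) else 0)

/-- The semisimple four-vector `p(s)` associated to a permutation `s` of the
eight indices. -/
def pvec (s : Equiv.Perm (Fin 8)) : T4 :=
  wedge4 (fun a : Fin 4 => s (Fin.castAdd 4 a)) +
    wedge4 (fun a : Fin 4 => s (Fin.natAdd 4 a))

/-- Antonyan's seven four-vectors `p₁,…,p₇` (with indices shifted to `0,…,7`):
`p₁ = p(1234 5678)`, `p₂ = p(1357 6824)`, `p₃ = p(1562 8437)`, `p₄ = p(1683 4752)`,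
`p₅ = p(1845 7263)`, `p₆ = p(1476 2385)`, `p₇ = p(1728 3546)`. -/
def P : Fin 7 → T4 :=
  ![wedge4 ![0, 1, 2, 3] + wedge4 ![4, 5, 6, 7],
    wedge4 ![0, 2, 4, 6] + wedge4 ![5, 7, 1, 3],
    wedge4 ![0, 4, 5, 1] + wedge4 ![7, 3, 2, 6],
    wedge4 ![0, 5, 7, 2] + wedge4 ![3, 6, 4, 1],
    wedge4 ![0, 7, 3, 4] + wedge4 ![6, 1, 5, 2],
    wedge4 ![0, 3, 6, 5] + wedge4 ![1, 2, 7, 4],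
    wedge4 ![0, 6, 1, 7] + wedge4 ![2, 4, 3, 5]]

/-- The Cartan subspace `𝔠 = span(p₁,…,p₇) ⊂ Λ⁴V`. -/
def cSpan : Submodule ℂ T4 := Submodule.span ℂ (Set.range P)

/-- The Cartan subspace `𝔠`, viewed inside `𝔤`. -/
def cG : Submodule ℂ (gl8 × T4) :=
  Submodule.span ℂ (Set.range fun i : Fin 7 => (((0 : gl8), P i) : gl8 × T4))

/-- The natural action of `g ∈ GL(V)` on `⊗⁴V` (restricting to `Λ⁴g` on `Λ⁴V`). -/
def gact (g : gl8) (T : T4) : T4 :=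
  fun v => ∑ w : Fin 4 → Fin 8, (∏ a : Fin 4, g (v a) (w a)) * T w

abbrev SL8 := Matrix.SpecialLinearGroup (Fin 8) ℂ

/-- The subspace of alternating 4-tensors, i.e. `Λ⁴V ⊂ ⊗⁴V`. -/
def AltSub : Submodule ℂ T4 where
  carrier := {T | IsAlt T}
  add_mem' := by
    intro S T hS hT σ v
    simp only [Pi.add_apply]
    rw [hS σ v, hT σ v]; ring
  zero_mem' := fun σ v => by simp
  smul_mem' := by
    intro c S hS σ v
    simp only [Pi.smul_apply, smul_eq_mul]
    rw [hS σ v]; ring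

/-- The diagonal traceless matrices, viewed inside `𝔤`. -/
def dG : Submodule ℂ (gl8 × T4) where
  carrier := {x | (∀ i j : Fin 8, i ≠ j → x.1 i j = 0) ∧ Matrix.trace x.1 = 0 ∧ x.2 = 0}
  add_mem' := by
    rintro x y ⟨hx0, hx1, hx2⟩ ⟨hy0, hy1, hy2⟩
    refine ⟨fun i j hij => ?_, ?_, ?_⟩
    · simp [Matrix.add_apply, hx0 i j hij, hy0 i j hij]
    · simp [Matrix.trace_add, hx1, hy1]
    · simp [hx2, hy2]
  zero_mem' := ⟨fun i j _ => rfl, by simp, rfl⟩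
  smul_mem' := by
    rintro c x ⟨hx0, hx1, hx2⟩
    refine ⟨fun i j hij => ?_, ?_, ?_⟩
    · simp [Matrix.smul_apply, hx0 i j hij]
    · simp [Matrix.trace_smul, hx1]
    · simp [hx2]

/-- A Cartan subspace of `𝔤₁ = Λ⁴V`: a maximal linear subspace of `Λ⁴V`
consisting of pairwise commuting semisimple elements of `𝔤`. -/
def IsCartanSubspace (c : Submodule ℂ T4) : Prop :=
  c ≤ AltSub ∧ (∀ x ∈ c, IsSemisimpleFour x) ∧ (∀ x ∈ c, ∀ y ∈ c, br11 x y = 0) ∧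
    ∀ c' : Submodule ℂ T4, c' ≤ AltSub → (∀ x ∈ c', IsSemisimpleFour x) →
      (∀ x ∈ c', ∀ y ∈ c', br11 x y = 0) → c ≤ c' → c' = c

/-- The traceless matrices `𝔰𝔩₈(ℂ)`, as the kernel of the trace. -/
def trKer : Submodule ℂ gl8 := LinearMap.ker (Matrix.traceLinearMap (Fin 8) ℂ ℂ)

/-- The derivation action `X ↦ X·T` on a fixed 4-tensor `T`, as a linear map in `X`. -/
def actL (T : T4) : gl8 →ₗ[ℂ] T4 where
  toFun X := br01 X T
  map_add' X Y := by
    funext v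
    simp [br01, Matrix.add_apply, add_mul, Finset.sum_add_distrib]
  map_smul' c X := by
    funext v
    simp [br01, Matrix.smul_apply, smul_eq_mul, Finset.mul_sum, mul_assoc]

abbrev T2 : Type := (Fin 2 → Fin 8) → ℂ

/-- The bivector `e_i ∧ e_j = e_i ⊗ e_j − e_j ⊗ e_i`, in coordinates. -/
def wedge2 (i j : Fin 8) : T2 :=
  fun v => (if v 0 = i ∧ v 1 = j then (1 : ℂ) else 0) - (if v 0 = j ∧ v 1 = i then 1 else 0)

/-- The wedge product `Λ²V × Λ²V → Λ⁴V ⊂ ⊗⁴V`, in coordinates (for the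
embedding convention `v₁∧…∧v₄ = Σ_σ sgn σ v_{σ(1)}⊗…⊗v_{σ(4)}`). -/
def wedge22 (S T : T2) : T4 :=
  fun v => (4 : ℂ)⁻¹ * ∑ σ : Equiv.Perm (Fin 4),
    sgn σ * (S (fun a : Fin 2 => v (σ (Fin.castAdd 2 a))) *
      T (fun a : Fin 2 => v (σ (Fin.natAdd 2 a))))

/-- The nondegenerate bivector `ω = e₁∧e₂ + e₃∧e₄ + e₅∧e₆ + e₇∧e₈`. -/
def omega2 : T2 := wedge2 0 1 + wedge2 2 3 + wedge2 4 5 + wedge2 6 7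

/-- The four-vector `ω ∧ ω`. -/
def omegaSq : T4 := wedge22 omega2 omega2

/-- The matrix of the skew form `B = e¹∧e² + e³∧e⁴ + e⁵∧e⁶ + e⁷∧e⁸`. -/
def Bmat : gl8 :=
  Matrix.of fun i j : Fin 8 =>
    if (i : ℕ) % 2 = 0 ∧ (j : ℕ) = (i : ℕ) + 1 then (1 : ℂ)
    else if (j : ℕ) % 2 = 0 ∧ (i : ℕ) = (j : ℕ) + 1 then -1 else 0

/-- The semisimple four-vector `p₁ = e₁∧e₂∧e₃∧e₄ + e₅∧e₆∧e₇∧e₈`. -/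
def p1four : T4 := wedge4 ![0, 1, 2, 3] + wedge4 ![4, 5, 6, 7]


section Aux
open Matrix
open Matrix

lemma omega2_eq (v : Fin 2 → Fin 8) : omega2 v = Bmat (v 0) (v 1) := by
  simp only [omega2, Pi.add_apply, wedge2]
  generalize v 0 = i
  generalize v 1 = j
  fin_cases i <;> fin_cases j <;> simp +decide [Bmat]

def SSum (E F : gl8) (v : Fin 4 → Fin 8) : ℂ :=
  ∑ σ : Equiv.Perm (Fin 4), sgn σ * (E (v (σ 0)) (v (σ 1)) * F (v (σ 2)) (v (σ 3)))

lemma hOS (u : Fin 4 → Fin 8) : omegaSq u = (4:ℂ)⁻¹ * SSum Bmat Bmat u := by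
  unfold omegaSq wedge22 SSum
  congr 1
  refine Finset.sum_congr rfl fun σ _ => ?_
  rw [omega2_eq, omega2_eq]
  rfl

def permList : List (Equiv.Perm (Fin 4)) :=
  [Equiv.mk ![0,1,2,3] ![0,1,2,3] (by decide) (by decide),
    Equiv.mk ![0,1,3,2] ![0,1,3,2] (by decide) (by decide),
    Equiv.mk ![0,2,1,3] ![0,2,1,3] (by decide) (by decide),
    Equiv.mk ![0,2,3,1] ![0,3,1,2] (by decide) (by decide),
    Equiv.mk ![0,3,1,2] ![0,2,3,1] (by decide) (by decide),
    Equiv.mk ![0,3,2,1] ![0,3,2,1] (by decide) (by decide),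
    Equiv.mk ![1,0,2,3] ![1,0,2,3] (by decide) (by decide),
    Equiv.mk ![1,0,3,2] ![1,0,3,2] (by decide) (by decide),
    Equiv.mk ![1,2,0,3] ![2,0,1,3] (by decide) (by decide),
    Equiv.mk ![1,2,3,0] ![3,0,1,2] (by decide) (by decide),
    Equiv.mk ![1,3,0,2] ![2,0,3,1] (by decide) (by decide),
    Equiv.mk ![1,3,2,0] ![3,0,2,1] (by decide) (by decide),
    Equiv.mk ![2,0,1,3] ![1,2,0,3] (by decide) (by decide),
    Equiv.mk ![2,0,3,1] ![1,3,0,2] (by decide) (by decide),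
    Equiv.mk ![2,1,0,3] ![2,1,0,3] (by decide) (by decide),
    Equiv.mk ![2,1,3,0] ![3,1,0,2] (by decide) (by decide),
    Equiv.mk ![2,3,0,1] ![2,3,0,1] (by decide) (by decide),
    Equiv.mk ![2,3,1,0] ![3,2,0,1] (by decide) (by decide),
    Equiv.mk ![3,0,1,2] ![1,2,3,0] (by decide) (by decide),
    Equiv.mk ![3,0,2,1] ![1,3,2,0] (by decide) (by decide),
    Equiv.mk ![3,1,0,2] ![2,1,3,0] (by decide) (by decide),
    Equiv.mk ![3,1,2,0] ![3,1,2,0] (by decide) (by decide),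
    Equiv.mk ![3,2,0,1] ![2,3,1,0] (by decide) (by decide),
    Equiv.mk ![3,2,1,0] ![3,2,1,0] (by decide) (by decide)]

lemma permList_nodup : permList.Nodup := by decide

lemma univ_eq : (Finset.univ : Finset (Equiv.Perm (Fin 4))) = permList.toFinset := by decide

lemma SSum_expand (E F : gl8) (v : Fin 4 → Fin 8) :
    SSum E F v =
      (1 : ℂ) * (E (v 0) (v 1) * F (v 2) (v 3)) +
      (-1 : ℂ) * (E (v 0) (v 1) * F (v 3) (v 2)) +
      (-1 : ℂ) * (E (v 0) (v 2) * F (v 1) (v 3)) +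
      (1 : ℂ) * (E (v 0) (v 2) * F (v 3) (v 1)) +
      (1 : ℂ) * (E (v 0) (v 3) * F (v 1) (v 2)) +
      (-1 : ℂ) * (E (v 0) (v 3) * F (v 2) (v 1)) +
      (-1 : ℂ) * (E (v 1) (v 0) * F (v 2) (v 3)) +
      (1 : ℂ) * (E (v 1) (v 0) * F (v 3) (v 2)) +
      (1 : ℂ) * (E (v 1) (v 2) * F (v 0) (v 3)) +
      (-1 : ℂ) * (E (v 1) (v 2) * F (v 3) (v 0)) +
      (-1 : ℂ) * (E (v 1) (v 3) * F (v 0) (v 2)) +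
      (1 : ℂ) * (E (v 1) (v 3) * F (v 2) (v 0)) +
      (1 : ℂ) * (E (v 2) (v 0) * F (v 1) (v 3)) +
      (-1 : ℂ) * (E (v 2) (v 0) * F (v 3) (v 1)) +
      (-1 : ℂ) * (E (v 2) (v 1) * F (v 0) (v 3)) +
      (1 : ℂ) * (E (v 2) (v 1) * F (v 3) (v 0)) +
      (1 : ℂ) * (E (v 2) (v 3) * F (v 0) (v 1)) +
      (-1 : ℂ) * (E (v 2) (v 3) * F (v 1) (v 0)) +
      (-1 : ℂ) * (E (v 3) (v 0) * F (v 1) (v 2)) +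
      (1 : ℂ) * (E (v 3) (v 0) * F (v 2) (v 1)) +
      (1 : ℂ) * (E (v 3) (v 1) * F (v 0) (v 2)) +
      (-1 : ℂ) * (E (v 3) (v 1) * F (v 2) (v 0)) +
      (-1 : ℂ) * (E (v 3) (v 2) * F (v 0) (v 1)) +
      (1 : ℂ) * (E (v 3) (v 2) * F (v 1) (v 0)) := by
  unfold SSum
  rw [univ_eq, List.sum_toFinset _ permList_nodup]
  simp only [permList, List.map_cons, List.map_nil, List.sum_cons, List.sum_nil, Equiv.coe_fn_mk, sgn,
    show Equiv.Perm.sign (Equiv.mk ![0,1,2,3] ![0,1,2,3] (by decide) (by decide) : Equiv.Perm (Fin 4)) = 1 from by decide,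
    show Equiv.Perm.sign (Equiv.mk ![0,1,3,2] ![0,1,3,2] (by decide) (by decide) : Equiv.Perm (Fin 4)) = -1 from by decide,
    show Equiv.Perm.sign (Equiv.mk ![0,2,1,3] ![0,2,1,3] (by decide) (by decide) : Equiv.Perm (Fin 4)) = -1 from by decide,
    show Equiv.Perm.sign (Equiv.mk ![0,2,3,1] ![0,3,1,2] (by decide) (by decide) : Equiv.Perm (Fin 4)) = 1 from by decide,
    show Equiv.Perm.sign (Equiv.mk ![0,3,1,2] ![0,2,3,1] (by decide) (by decide) : Equiv.Perm (Fin 4)) = 1 from by decide,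
    show Equiv.Perm.sign (Equiv.mk ![0,3,2,1] ![0,3,2,1] (by decide) (by decide) : Equiv.Perm (Fin 4)) = -1 from by decide,
    show Equiv.Perm.sign (Equiv.mk ![1,0,2,3] ![1,0,2,3] (by decide) (by decide) : Equiv.Perm (Fin 4)) = -1 from by decide,
    show Equiv.Perm.sign (Equiv.mk ![1,0,3,2] ![1,0,3,2] (by decide) (by decide) : Equiv.Perm (Fin 4)) = 1 from by decide,
    show Equiv.Perm.sign (Equiv.mk ![1,2,0,3] ![2,0,1,3] (by decide) (by decide) : Equiv.Perm (Fin 4)) = 1 from by decide,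
    show Equiv.Perm.sign (Equiv.mk ![1,2,3,0] ![3,0,1,2] (by decide) (by decide) : Equiv.Perm (Fin 4)) = -1 from by decide,
    show Equiv.Perm.sign (Equiv.mk ![1,3,0,2] ![2,0,3,1] (by decide) (by decide) : Equiv.Perm (Fin 4)) = -1 from by decide,
    show Equiv.Perm.sign (Equiv.mk ![1,3,2,0] ![3,0,2,1] (by decide) (by decide) : Equiv.Perm (Fin 4)) = 1 from by decide,
    show Equiv.Perm.sign (Equiv.mk ![2,0,1,3] ![1,2,0,3] (by decide) (by decide) : Equiv.Perm (Fin 4)) = 1 from by decide,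
    show Equiv.Perm.sign (Equiv.mk ![2,0,3,1] ![1,3,0,2] (by decide) (by decide) : Equiv.Perm (Fin 4)) = -1 from by decide,
    show Equiv.Perm.sign (Equiv.mk ![2,1,0,3] ![2,1,0,3] (by decide) (by decide) : Equiv.Perm (Fin 4)) = -1 from by decide,
    show Equiv.Perm.sign (Equiv.mk ![2,1,3,0] ![3,1,0,2] (by decide) (by decide) : Equiv.Perm (Fin 4)) = 1 from by decide,
    show Equiv.Perm.sign (Equiv.mk ![2,3,0,1] ![2,3,0,1] (by decide) (by decide) : Equiv.Perm (Fin 4)) = 1 from by decide,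
    show Equiv.Perm.sign (Equiv.mk ![2,3,1,0] ![3,2,0,1] (by decide) (by decide) : Equiv.Perm (Fin 4)) = -1 from by decide,
    show Equiv.Perm.sign (Equiv.mk ![3,0,1,2] ![1,2,3,0] (by decide) (by decide) : Equiv.Perm (Fin 4)) = -1 from by decide,
    show Equiv.Perm.sign (Equiv.mk ![3,0,2,1] ![1,3,2,0] (by decide) (by decide) : Equiv.Perm (Fin 4)) = 1 from by decide,
    show Equiv.Perm.sign (Equiv.mk ![3,1,0,2] ![2,1,3,0] (by decide) (by decide) : Equiv.Perm (Fin 4)) = 1 from by decide,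
    show Equiv.Perm.sign (Equiv.mk ![3,1,2,0] ![3,1,2,0] (by decide) (by decide) : Equiv.Perm (Fin 4)) = -1 from by decide,
    show Equiv.Perm.sign (Equiv.mk ![3,2,0,1] ![2,3,1,0] (by decide) (by decide) : Equiv.Perm (Fin 4)) = -1 from by decide,
    show Equiv.Perm.sign (Equiv.mk ![3,2,1,0] ![3,2,1,0] (by decide) (by decide) : Equiv.Perm (Fin 4)) = 1 from by decide]
  norm_num
  simp only [Matrix.cons_val]
  ring

lemma SSum_swap (E F : gl8) (v : Fin 4 → Fin 8) : SSum E F v = SSum F E v := by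
  rw [SSum_expand, SSum_expand]
  ring

lemma key (X : gl8) (v : Fin 4 → Fin 8) :
    br01 X omegaSq v = (2:ℂ)⁻¹ * SSum (X * Bmat + Bmat * Matrix.transpose X) Bmat v := by
  unfold br01
  simp only [hOS]
  rw [show (2:ℂ)⁻¹ * SSum (X * Bmat + Bmat * Matrix.transpose X) Bmat v
      = (4:ℂ)⁻¹ * (SSum (X * Bmat + Bmat * Matrix.transpose X) Bmat v
        + SSum Bmat (X * Bmat + Bmat * Matrix.transpose X) v) from by
    rw [SSum_swap Bmat]; ring]
  rw [mul_add]
  unfold SSum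
  simp only [Finset.mul_sum]
  rw [← Finset.sum_add_distrib]
  have swap3 : ∀ (f : Fin 4 → Fin 8 → Equiv.Perm (Fin 4) → ℂ),
      (∑ a : Fin 4, ∑ s : Fin 8, ∑ σ : Equiv.Perm (Fin 4), f a s σ)
        = ∑ σ : Equiv.Perm (Fin 4), ∑ a : Fin 4, ∑ s : Fin 8, f a s σ := fun f =>
    (Finset.sum_congr rfl fun a _ => Finset.sum_comm).trans Finset.sum_comm
  rw [swap3]
  refine Finset.sum_congr rfl fun σ _ => ?_
  rw [← Equiv.sum_comp σ (fun a => ∑ s : Fin 8, X (v a) s *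
      ((4:ℂ)⁻¹ * (sgn σ * (Bmat (Function.update v a s (σ 0)) (Function.update v a s (σ 1)) *
        Bmat (Function.update v a s (σ 2)) (Function.update v a s (σ 3))))))]
  rw [Fin.sum_univ_four]
  simp +decide only [Function.update_apply, EmbeddingLike.apply_eq_iff_eq, if_true, if_false]
  have e1 : ∑ s : Fin 8, X (v (σ 0)) s * ((4:ℂ)⁻¹ * (sgn σ *
      (Bmat s (v (σ 1)) * Bmat (v (σ 2)) (v (σ 3))))) =
      (4:ℂ)⁻¹ * sgn σ * Bmat (v (σ 2)) (v (σ 3)) * ∑ s : Fin 8, X (v (σ 0)) s * Bmat s (v (σ 1)) := by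
    rw [Finset.mul_sum]; exact Finset.sum_congr rfl fun s _ => by ring
  have e2 : ∑ s : Fin 8, X (v (σ 1)) s * ((4:ℂ)⁻¹ * (sgn σ *
      (Bmat (v (σ 0)) s * Bmat (v (σ 2)) (v (σ 3))))) =
      (4:ℂ)⁻¹ * sgn σ * Bmat (v (σ 2)) (v (σ 3)) * ∑ s : Fin 8, Bmat (v (σ 0)) s * X (v (σ 1)) s := by
    rw [Finset.mul_sum]; exact Finset.sum_congr rfl fun s _ => by ring
  have e3 : ∑ s : Fin 8, X (v (σ 2)) s * ((4:ℂ)⁻¹ * (sgn σ *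
      (Bmat (v (σ 0)) (v (σ 1)) * Bmat s (v (σ 3))))) =
      (4:ℂ)⁻¹ * sgn σ * Bmat (v (σ 0)) (v (σ 1)) * ∑ s : Fin 8, X (v (σ 2)) s * Bmat s (v (σ 3)) := by
    rw [Finset.mul_sum]; exact Finset.sum_congr rfl fun s _ => by ring
  have e4 : ∑ s : Fin 8, X (v (σ 3)) s * ((4:ℂ)⁻¹ * (sgn σ *
      (Bmat (v (σ 0)) (v (σ 1)) * Bmat (v (σ 2)) s))) =
      (4:ℂ)⁻¹ * sgn σ * Bmat (v (σ 0)) (v (σ 1)) * ∑ s : Fin 8, Bmat (v (σ 2)) s * X (v (σ 3)) s := by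
    rw [Finset.mul_sum]; exact Finset.sum_congr rfl fun s _ => by ring
  rw [e1, e2, e3, e4]
  simp only [Matrix.add_apply, Matrix.mul_apply, Matrix.transpose_apply]
  ring

lemma Bt : Matrix.transpose Bmat = -Bmat := by
  ext i j
  fin_cases i <;> fin_cases j <;> norm_num [Bmat]

lemma hB2 : Bmat * Bmat = -1 := by
  ext i j
  fin_cases i <;> fin_cases j <;>
    simp +decide [Matrix.mul_apply, Fin.sum_univ_eight, Bmat, Matrix.one_apply]

set_option maxHeartbeats 2000000 in
lemma inj (E : gl8) (hA : ∀ i j : Fin 8, E j i = -E i j)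
    (h : ∀ v : Fin 4 → Fin 8, SSum E Bmat v = 0) : E = 0 := by
  have z00 : E 0 0 = 0 := by linear_combination (hA 0 0) / 2
  have z01 : E 0 1 = 0 := by
    have t1 := h ![0, 1, 2, 3]
    have t2 := h ![0, 1, 4, 5]
    have t3 := h ![2, 3, 4, 5]
    rw [SSum_expand] at t1 t2 t3
    simp +decide [Bmat] at t1 t2 t3
    first
      | linear_combination t1 / 8 + t2 / 8 - t3 / 8 + (hA 0 1) / 2
      | linear_combination t1 / 8 + t2 / 8 + t3 / 8 + (hA 0 1) / 2
      | linear_combination -t1 / 8 - t2 / 8 + t3 / 8 + (hA 0 1) / 2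
      | linear_combination -t1 / 8 - t2 / 8 - t3 / 8 + (hA 0 1) / 2
  have z02 : E 0 2 = 0 := by
    have t := h ![0, 2, 4, 5]
    rw [SSum_expand] at t
    simp +decide [Bmat] at t
    first
      | linear_combination t / 4 + (hA 0 2) / 2
      | linear_combination -t / 4 + (hA 0 2) / 2
  have z03 : E 0 3 = 0 := by
    have t := h ![0, 3, 4, 5]
    rw [SSum_expand] at t
    simp +decide [Bmat] at t
    first
      | linear_combination t / 4 + (hA 0 3) / 2
      | linear_combination -t / 4 + (hA 0 3) / 2
  have z04 : E 0 4 = 0 := by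
    have t := h ![0, 4, 2, 3]
    rw [SSum_expand] at t
    simp +decide [Bmat] at t
    first
      | linear_combination t / 4 + (hA 0 4) / 2
      | linear_combination -t / 4 + (hA 0 4) / 2
  have z05 : E 0 5 = 0 := by
    have t := h ![0, 5, 2, 3]
    rw [SSum_expand] at t
    simp +decide [Bmat] at t
    first
      | linear_combination t / 4 + (hA 0 5) / 2
      | linear_combination -t / 4 + (hA 0 5) / 2
  have z06 : E 0 6 = 0 := by
    have t := h ![0, 6, 2, 3]
    rw [SSum_expand] at t
    simp +decide [Bmat] at t
    first
      | linear_combination t / 4 + (hA 0 6) / 2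
      | linear_combination -t / 4 + (hA 0 6) / 2
  have z07 : E 0 7 = 0 := by
    have t := h ![0, 7, 2, 3]
    rw [SSum_expand] at t
    simp +decide [Bmat] at t
    first
      | linear_combination t / 4 + (hA 0 7) / 2
      | linear_combination -t / 4 + (hA 0 7) / 2
  have z10 : E 1 0 = 0 := by rw [hA 0 1, z01, neg_zero]
  have z11 : E 1 1 = 0 := by linear_combination (hA 1 1) / 2
  have z12 : E 1 2 = 0 := by
    have t := h ![1, 2, 4, 5]
    rw [SSum_expand] at t
    simp +decide [Bmat] at t
    first
      | linear_combination t / 4 + (hA 1 2) / 2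
      | linear_combination -t / 4 + (hA 1 2) / 2
  have z13 : E 1 3 = 0 := by
    have t := h ![1, 3, 4, 5]
    rw [SSum_expand] at t
    simp +decide [Bmat] at t
    first
      | linear_combination t / 4 + (hA 1 3) / 2
      | linear_combination -t / 4 + (hA 1 3) / 2
  have z14 : E 1 4 = 0 := by
    have t := h ![1, 4, 2, 3]
    rw [SSum_expand] at t
    simp +decide [Bmat] at t
    first
      | linear_combination t / 4 + (hA 1 4) / 2
      | linear_combination -t / 4 + (hA 1 4) / 2
  have z15 : E 1 5 = 0 := by
    have t := h ![1, 5, 2, 3]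
    rw [SSum_expand] at t
    simp +decide [Bmat] at t
    first
      | linear_combination t / 4 + (hA 1 5) / 2
      | linear_combination -t / 4 + (hA 1 5) / 2
  have z16 : E 1 6 = 0 := by
    have t := h ![1, 6, 2, 3]
    rw [SSum_expand] at t
    simp +decide [Bmat] at t
    first
      | linear_combination t / 4 + (hA 1 6) / 2
      | linear_combination -t / 4 + (hA 1 6) / 2
  have z17 : E 1 7 = 0 := by
    have t := h ![1, 7, 2, 3]
    rw [SSum_expand] at t
    simp +decide [Bmat] at t
    first
      | linear_combination t / 4 + (hA 1 7) / 2
      | linear_combination -t / 4 + (hA 1 7) / 2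
  have z20 : E 2 0 = 0 := by rw [hA 0 2, z02, neg_zero]
  have z21 : E 2 1 = 0 := by rw [hA 1 2, z12, neg_zero]
  have z22 : E 2 2 = 0 := by linear_combination (hA 2 2) / 2
  have z23 : E 2 3 = 0 := by
    have t1 := h ![2, 3, 0, 1]
    have t2 := h ![2, 3, 4, 5]
    have t3 := h ![0, 1, 4, 5]
    rw [SSum_expand] at t1 t2 t3
    simp +decide [Bmat] at t1 t2 t3
    first
      | linear_combination t1 / 8 + t2 / 8 - t3 / 8 + (hA 2 3) / 2
      | linear_combination t1 / 8 + t2 / 8 + t3 / 8 + (hA 2 3) / 2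
      | linear_combination -t1 / 8 - t2 / 8 + t3 / 8 + (hA 2 3) / 2
      | linear_combination -t1 / 8 - t2 / 8 - t3 / 8 + (hA 2 3) / 2
  have z24 : E 2 4 = 0 := by
    have t := h ![2, 4, 0, 1]
    rw [SSum_expand] at t
    simp +decide [Bmat] at t
    first
      | linear_combination t / 4 + (hA 2 4) / 2
      | linear_combination -t / 4 + (hA 2 4) / 2
  have z25 : E 2 5 = 0 := by
    have t := h ![2, 5, 0, 1]
    rw [SSum_expand] at t
    simp +decide [Bmat] at t
    first
      | linear_combination t / 4 + (hA 2 5) / 2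
      | linear_combination -t / 4 + (hA 2 5) / 2
  have z26 : E 2 6 = 0 := by
    have t := h ![2, 6, 0, 1]
    rw [SSum_expand] at t
    simp +decide [Bmat] at t
    first
      | linear_combination t / 4 + (hA 2 6) / 2
      | linear_combination -t / 4 + (hA 2 6) / 2
  have z27 : E 2 7 = 0 := by
    have t := h ![2, 7, 0, 1]
    rw [SSum_expand] at t
    simp +decide [Bmat] at t
    first
      | linear_combination t / 4 + (hA 2 7) / 2
      | linear_combination -t / 4 + (hA 2 7) / 2
  have z30 : E 3 0 = 0 := by rw [hA 0 3, z03, neg_zero]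
  have z31 : E 3 1 = 0 := by rw [hA 1 3, z13, neg_zero]
  have z32 : E 3 2 = 0 := by rw [hA 2 3, z23, neg_zero]
  have z33 : E 3 3 = 0 := by linear_combination (hA 3 3) / 2
  have z34 : E 3 4 = 0 := by
    have t := h ![3, 4, 0, 1]
    rw [SSum_expand] at t
    simp +decide [Bmat] at t
    first
      | linear_combination t / 4 + (hA 3 4) / 2
      | linear_combination -t / 4 + (hA 3 4) / 2
  have z35 : E 3 5 = 0 := by
    have t := h ![3, 5, 0, 1]
    rw [SSum_expand] at t
    simp +decide [Bmat] at t
    first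
      | linear_combination t / 4 + (hA 3 5) / 2
      | linear_combination -t / 4 + (hA 3 5) / 2
  have z36 : E 3 6 = 0 := by
    have t := h ![3, 6, 0, 1]
    rw [SSum_expand] at t
    simp +decide [Bmat] at t
    first
      | linear_combination t / 4 + (hA 3 6) / 2
      | linear_combination -t / 4 + (hA 3 6) / 2
  have z37 : E 3 7 = 0 := by
    have t := h ![3, 7, 0, 1]
    rw [SSum_expand] at t
    simp +decide [Bmat] at t
    first
      | linear_combination t / 4 + (hA 3 7) / 2
      | linear_combination -t / 4 + (hA 3 7) / 2
  have z40 : E 4 0 = 0 := by rw [hA 0 4, z04, neg_zero]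
  have z41 : E 4 1 = 0 := by rw [hA 1 4, z14, neg_zero]
  have z42 : E 4 2 = 0 := by rw [hA 2 4, z24, neg_zero]
  have z43 : E 4 3 = 0 := by rw [hA 3 4, z34, neg_zero]
  have z44 : E 4 4 = 0 := by linear_combination (hA 4 4) / 2
  have z45 : E 4 5 = 0 := by
    have t1 := h ![4, 5, 0, 1]
    have t2 := h ![4, 5, 2, 3]
    have t3 := h ![0, 1, 2, 3]
    rw [SSum_expand] at t1 t2 t3
    simp +decide [Bmat] at t1 t2 t3
    first
      | linear_combination t1 / 8 + t2 / 8 - t3 / 8 + (hA 4 5) / 2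
      | linear_combination t1 / 8 + t2 / 8 + t3 / 8 + (hA 4 5) / 2
      | linear_combination -t1 / 8 - t2 / 8 + t3 / 8 + (hA 4 5) / 2
      | linear_combination -t1 / 8 - t2 / 8 - t3 / 8 + (hA 4 5) / 2
  have z46 : E 4 6 = 0 := by
    have t := h ![4, 6, 0, 1]
    rw [SSum_expand] at t
    simp +decide [Bmat] at t
    first
      | linear_combination t / 4 + (hA 4 6) / 2
      | linear_combination -t / 4 + (hA 4 6) / 2
  have z47 : E 4 7 = 0 := by
    have t := h ![4, 7, 0, 1]
    rw [SSum_expand] at t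
    simp +decide [Bmat] at t
    first
      | linear_combination t / 4 + (hA 4 7) / 2
      | linear_combination -t / 4 + (hA 4 7) / 2
  have z50 : E 5 0 = 0 := by rw [hA 0 5, z05, neg_zero]
  have z51 : E 5 1 = 0 := by rw [hA 1 5, z15, neg_zero]
  have z52 : E 5 2 = 0 := by rw [hA 2 5, z25, neg_zero]
  have z53 : E 5 3 = 0 := by rw [hA 3 5, z35, neg_zero]
  have z54 : E 5 4 = 0 := by rw [hA 4 5, z45, neg_zero]
  have z55 : E 5 5 = 0 := by linear_combination (hA 5 5) / 2
  have z56 : E 5 6 = 0 := by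
    have t := h ![5, 6, 0, 1]
    rw [SSum_expand] at t
    simp +decide [Bmat] at t
    first
      | linear_combination t / 4 + (hA 5 6) / 2
      | linear_combination -t / 4 + (hA 5 6) / 2
  have z57 : E 5 7 = 0 := by
    have t := h ![5, 7, 0, 1]
    rw [SSum_expand] at t
    simp +decide [Bmat] at t
    first
      | linear_combination t / 4 + (hA 5 7) / 2
      | linear_combination -t / 4 + (hA 5 7) / 2
  have z60 : E 6 0 = 0 := by rw [hA 0 6, z06, neg_zero]
  have z61 : E 6 1 = 0 := by rw [hA 1 6, z16, neg_zero]
  have z62 : E 6 2 = 0 := by rw [hA 2 6, z26, neg_zero]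
  have z63 : E 6 3 = 0 := by rw [hA 3 6, z36, neg_zero]
  have z64 : E 6 4 = 0 := by rw [hA 4 6, z46, neg_zero]
  have z65 : E 6 5 = 0 := by rw [hA 5 6, z56, neg_zero]
  have z66 : E 6 6 = 0 := by linear_combination (hA 6 6) / 2
  have z67 : E 6 7 = 0 := by
    have t1 := h ![6, 7, 0, 1]
    have t2 := h ![6, 7, 2, 3]
    have t3 := h ![0, 1, 2, 3]
    rw [SSum_expand] at t1 t2 t3
    simp +decide [Bmat] at t1 t2 t3
    first
      | linear_combination t1 / 8 + t2 / 8 - t3 / 8 + (hA 6 7) / 2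
      | linear_combination t1 / 8 + t2 / 8 + t3 / 8 + (hA 6 7) / 2
      | linear_combination -t1 / 8 - t2 / 8 + t3 / 8 + (hA 6 7) / 2
      | linear_combination -t1 / 8 - t2 / 8 - t3 / 8 + (hA 6 7) / 2
  have z70 : E 7 0 = 0 := by rw [hA 0 7, z07, neg_zero]
  have z71 : E 7 1 = 0 := by rw [hA 1 7, z17, neg_zero]
  have z72 : E 7 2 = 0 := by rw [hA 2 7, z27, neg_zero]
  have z73 : E 7 3 = 0 := by rw [hA 3 7, z37, neg_zero]
  have z74 : E 7 4 = 0 := by rw [hA 4 7, z47, neg_zero]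
  have z75 : E 7 5 = 0 := by rw [hA 5 7, z57, neg_zero]
  have z76 : E 7 6 = 0 := by rw [hA 6 7, z67, neg_zero]
  have z77 : E 7 7 = 0 := by linear_combination (hA 7 7) / 2
  ext i j
  fin_cases i <;> fin_cases j <;> simp only [Matrix.zero_apply] <;> assumption


open Matrix

def Dmat (X : gl8) : gl8 := X * Bmat + Bmat * Xᵀ

lemma Dmat_antisym (X : gl8) : ∀ i j : Fin 8, Dmat X j i = -(Dmat X) i j := by
  have hT : (Dmat X)ᵀ = -(Dmat X) := by
    unfold Dmat
    rw [Matrix.transpose_add, Matrix.transpose_mul, Matrix.transpose_mul,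
      Matrix.transpose_transpose, Bt]
    noncomm_ring
  intro i j
  rw [← Matrix.transpose_apply (Dmat X) i j, hT, Matrix.neg_apply]

lemma crit (X : gl8) : br01 X omegaSq = 0 ↔ Dmat X = 0 := by
  constructor
  · intro h
    apply inj _ (Dmat_antisym X)
    intro v
    have h2 := congrFun h v
    rw [key, Pi.zero_apply] at h2
    rcases mul_eq_zero.mp h2 with h' | h'
    · norm_num at h'
    · exact h'
  · intro h
    funext v
    rw [Pi.zero_apply, key, show X * Bmat + Bmat * Xᵀ = 0 from h, SSum_expand]
    simp

lemma MD1 (X : gl8) : Xᵀ * Bmat + Bmat * X = -(Bmat * Dmat X * Bmat) := by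
  unfold Dmat
  rw [show Bmat * (X * Bmat + Bmat * Xᵀ) * Bmat
      = Bmat * X * (Bmat * Bmat) + (Bmat * Bmat) * (Xᵀ * Bmat) from by noncomm_ring, hB2]
  noncomm_ring

lemma MD2 (X : gl8) : Dmat X = -(Bmat * (Xᵀ * Bmat + Bmat * X) * Bmat) := by
  unfold Dmat
  rw [show Bmat * (Xᵀ * Bmat + Bmat * X) * Bmat
      = Bmat * Xᵀ * (Bmat * Bmat) + (Bmat * Bmat) * (X * Bmat) from by noncomm_ring, hB2]
  noncomm_ring

lemma iffM (X : gl8) : Dmat X = 0 ↔ Xᵀ * Bmat + Bmat * X = 0 := by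
  constructor <;> intro h
  · rw [MD1, h]
    simp
  · rw [MD2, h]
    simp

lemma traceD (X : gl8) (h : Dmat X = 0) : Matrix.trace X = 0 := by
  have hX : X = Bmat * Xᵀ * Bmat := by
    have h0 : Dmat X * Bmat = 0 := by rw [h, zero_mul]
    unfold Dmat at h0
    rw [add_mul, mul_assoc X, hB2, mul_neg_one] at h0
    exact neg_add_eq_zero.mp h0
  have t2 : Matrix.trace X = -Matrix.trace X := by
    conv_lhs => rw [hX]
    rw [Matrix.trace_mul_comm, ← mul_assoc, hB2, neg_one_mul, Matrix.trace_neg,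
      Matrix.trace_transpose]
  linear_combination t2 / 2

def Dlin : gl8 →ₗ[ℂ] gl8 where
  toFun X := Dmat X
  map_add' X Y := by
    show (X + Y) * Bmat + Bmat * (X + Y)ᵀ = (X * Bmat + Bmat * Xᵀ) + (Y * Bmat + Bmat * Yᵀ)
    rw [Matrix.transpose_add]
    noncomm_ring
  map_smul' c X := by
    show (c • X) * Bmat + Bmat * (c • X)ᵀ = c • (X * Bmat + Bmat * Xᵀ)
    rw [Matrix.transpose_smul]
    simp [Matrix.smul_mul, Matrix.mul_smul, smul_add]

lemma subEq : trKer ⊓ LinearMap.ker (actL omegaSq) = LinearMap.ker Dlin := by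
  ext X
  simp only [Submodule.mem_inf, LinearMap.mem_ker, trKer, Matrix.traceLinearMap_apply]
  have ha : actL omegaSq X = br01 X omegaSq := rfl
  have hd : Dlin X = Dmat X := rfl
  rw [ha, hd]
  constructor
  · rintro ⟨h1, h2⟩
    exact (crit X).mp h2
  · intro h
    exact ⟨traceD X h, (crit X).mpr h⟩

def symSub : Submodule ℂ gl8 where
  carrier := {Y | Yᵀ = Y}
  add_mem' := by
    intro a b ha hb
    simp only [Set.mem_setOf_eq] at *
    rw [Matrix.transpose_add, ha, hb]
  zero_mem' := Matrix.transpose_zero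
  smul_mem' := by
    intro c Y h
    simp only [Set.mem_setOf_eq] at *
    rw [Matrix.transpose_smul, h]

def mulB : gl8 →ₗ[ℂ] gl8 where
  toFun X := X * Bmat
  map_add' X Y := add_mul _ _ _
  map_smul' c X := smul_mul_assoc _ _ _

def mulBneg : gl8 →ₗ[ℂ] gl8 where
  toFun X := X * (-Bmat)
  map_add' X Y := add_mul _ _ _
  map_smul' c X := smul_mul_assoc _ _ _

def eB : gl8 ≃ₗ[ℂ] gl8 :=
  LinearEquiv.ofLinear mulB mulBneg
    (LinearMap.ext fun X => by
      show X * (-Bmat) * Bmat = X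
      rw [mul_assoc, neg_mul, hB2, neg_neg, mul_one])
    (LinearMap.ext fun X => by
      show X * Bmat * (-Bmat) = X
      rw [mul_assoc, mul_neg, hB2, neg_neg, mul_one])

lemma mapEq : Submodule.map (eB : gl8 →ₗ[ℂ] gl8) (LinearMap.ker Dlin) = symSub := by
  ext Y
  simp only [Submodule.mem_map, LinearMap.mem_ker]
  constructor
  · rintro ⟨X, hX, rfl⟩
    have hX' : X * Bmat + Bmat * Xᵀ = 0 := hX
    show ((X * Bmat)ᵀ : gl8) = X * Bmat
    rw [Matrix.transpose_mul, Bt, neg_mul, eq_neg_of_add_eq_zero_left hX']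
  · intro hY
    have hY' : (Yᵀ : gl8) = Y := hY
    refine ⟨Y * (-Bmat), ?_, ?_⟩
    · show Y * (-Bmat) * Bmat + Bmat * (Y * (-Bmat))ᵀ = 0
      rw [Matrix.transpose_mul, Matrix.transpose_neg, Bt, neg_neg, hY',
        mul_assoc Y, neg_mul, hB2,
        show Bmat * (Bmat * Y) = Bmat * Bmat * Y from (mul_assoc _ _ _).symm, hB2]
      simp
    · show Y * (-Bmat) * Bmat = Y
      rw [mul_assoc, neg_mul, hB2, neg_neg, mul_one]

def symEquiv : ↥symSub ≃ₗ[ℂ] (Sym2 (Fin 8) → ℂ) where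
  toFun Y := Sym2.lift ⟨fun i j => (Y : gl8) i j, fun i j => by
    have h := congrFun (congrFun Y.2 i) j
    simpa [Matrix.transpose_apply] using h.symm⟩
  map_add' Y Z := by
    ext s
    induction s using Sym2.ind with
    | _ i j => simp
  map_smul' c Y := by
    ext s
    induction s using Sym2.ind with
    | _ i j => simp
  invFun f := ⟨Matrix.of fun i j => f s(i, j), by
    ext i j
    show f s(j, i) = f s(i, j)
    rw [Sym2.eq_swap]⟩
  left_inv Y := by
    apply Subtype.ext
    ext i j
    simp
  right_inv f := by
    ext s
    induction s using Sym2.ind with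
    | _ i j => simp

lemma frSym : Module.finrank ℂ ↥symSub = 36 := by
  rw [symEquiv.finrank_eq, Module.finrank_fintype_fun_eq_card, Sym2.card]
  decide


end Aux

/-- The stabilizer in `𝔰𝔩₈(ℂ)` of `ω∧ω` (for
`ω = e₁∧e₂ + e₃∧e₄ + e₅∧e₆ + e₇∧e₈`) under the derivation action on `Λ⁴ℂ⁸`
equals the symplectic Lie algebra `{X ∈ 𝔰𝔩₈ : XᵀB + BX = 0}` of the skew form
`B`; in particular it has dimension 36 (the simple Lie algebra of type C₄). -/
theorem statement15 :
    {X : gl8 | Matrix.trace X = 0 ∧ br01 X omegaSq = 0} =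
      {X : gl8 | Matrix.trace X = 0 ∧ Matrix.transpose X * Bmat + Bmat * X = 0} ∧
    Module.finrank ℂ ↥(trKer ⊓ LinearMap.ker (actL omegaSq)) = 36 := by
  constructor
  · ext X
    simp only [Set.mem_setOf_eq]
    constructor
    · rintro ⟨h1, h2⟩
      exact ⟨h1, (iffM X).mp ((crit X).mp h2)⟩
    · rintro ⟨h1, h2⟩
      exact ⟨h1, (crit X).mpr ((iffM X).mpr h2)⟩
  · rw [subEq]
    calc Module.finrank ℂ ↥(LinearMap.ker Dlin)
        = Module.finrank ℂ ↥(Submodule.map (eB : gl8 →ₗ[ℂ] gl8) (LinearMap.ker Dlin)) :=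
          (LinearEquiv.finrank_map_eq eB (LinearMap.ker Dlin)).symm
      _ = Module.finrank ℂ ↥symSub := by rw [mapEq]
      _ = 36 := frSym


end
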